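/- Under common support, conditionally independent censoring, correctly specified G > 0 and π_0, the IPCW-IPS estimator of the Lagrangian policy gradient is unbiased: E_{p(x)π_0(a|x)p(L,C|x,a)}[(π_θ(a|x)/π_0(a|x))·(I{min(L,C)>t}/G(t|x,a) − λ c(x,a))·∇_θ log π_θ(a|x)] = ∇_θ L(π_θ, t, λ), where ∇_θ L(π_θ,t,λ) = E_{p(x)π_θ(a|x)}[(S(x,a,t) − λ c(x,a)) ∇_θ log π_θ(a|x)]. -/

import Mathlib

open MeasureTheory Finset

/-- Unbiasedness of the IPCW-IPS estimator of the Lagrangian policy gradient. -/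
theorem ipcw_ips_lagrangian_gradient_unbiased
    {X A Ω : Type*} [Fintype X] [Fintype A] [MeasurableSpace Ω] {d : ℕ}
    (p : X → ℝ) (hp : ∀ x, 0 ≤ p x) (hp1 : ∑ x, p x = 1)
    (π0 : X → A → ℝ)
    (hπ0 : ∀ x a, 0 ≤ π0 x a) (hπ0s : ∀ x, ∑ a, π0 x a = 1)
    (π : (Fin d → ℝ) → X → A → ℝ)
    (hpos : ∀ θ x a, 0 < π θ x a)
    (hsum : ∀ θ x, ∑ a, π θ x a = 1)
    (θ0 : Fin d → ℝ)
    (hdiff : ∀ x a, DifferentiableAt ℝ (fun θ => π θ x a) θ0)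
    (hsupp : ∀ x a, 0 < π θ0 x a → 0 < π0 x a)
    (μ : X → A → Measure Ω) [∀ x a, IsProbabilityMeasure (μ x a)]
    (L C : Ω → ℝ) (hL : Measurable L) (hC : Measurable C)
    (hInd : ∀ x a (s u : ℝ), μ x a {ω | s < L ω ∧ u < C ω} =
      μ x a {ω | s < L ω} * μ x a {ω | u < C ω})
    (t : ℝ)
    (hG : ∀ x a, 0 < (μ x a {ω | t < C ω}).toReal)
    (c : X → A → ℝ) (lam : ℝ) (hlam : 0 ≤ lam)
    (v : Fin d → ℝ) :
    ∑ x, p x * ∑ a, π0 x a *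
        ∫ ω, (π θ0 x a / π0 x a) *
          (Set.indicator {ω : Ω | t < min (L ω) (C ω)} (fun _ => (1 : ℝ)) ω
              / (μ x a {ω | t < C ω}).toReal - lam * c x a) *
          (fderiv ℝ (fun θ => Real.log (π θ x a)) θ0 v) ∂(μ x a)
      = ∑ x, p x * ∑ a, π θ0 x a *
          (((μ x a {ω | t < L ω}).toReal - lam * c x a) *
            (fderiv ℝ (fun θ => Real.log (π θ x a)) θ0 v)) := by

  refine Finset.sum_congr rfl fun x _ => ?_
  congr 1
  refine Finset.sum_congr rfl fun a _ => ?_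
  have hπ0pos : 0 < π0 x a := hsupp x a (hpos θ0 x a)
  set g : ℝ := fderiv ℝ (fun θ => Real.log (π θ x a)) θ0 v with hg
  set G : ℝ := (μ x a {ω | t < C ω}).toReal with hGdef
  set S : ℝ := (μ x a {ω | t < L ω}).toReal with hSdef
  set K : ℝ := π θ0 x a / π0 x a with hK
  have hs : MeasurableSet {ω : Ω | t < min (L ω) (C ω)} := by
    have : {ω : Ω | t < min (L ω) (C ω)} = {ω | t < L ω} ∩ {ω | t < C ω} := by
      ext ω; simp [lt_min_iff, Set.mem_setOf_eq]
    rw [this]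
    exact (measurableSet_lt measurable_const hL).inter (measurableSet_lt measurable_const hC)
  have hindint : Integrable (Set.indicator {ω : Ω | t < min (L ω) (C ω)} (fun _ => (1:ℝ))) (μ x a) :=
    (integrable_const (1:ℝ)).indicator hs
  have hmeas : (μ x a {ω : Ω | t < min (L ω) (C ω)}).toReal = S * G := by
    have hset : {ω : Ω | t < min (L ω) (C ω)} = {ω | t < L ω ∧ t < C ω} := by
      ext ω; simp [lt_min_iff, Set.mem_setOf_eq]
    rw [hset, hInd x a t t, ENNReal.toReal_mul]
  have hintind : ∫ ω, Set.indicator {ω : Ω | t < min (L ω) (C ω)} (fun _ => (1:ℝ)) ω ∂(μ x a)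
      = S * G := by
    rw [← hmeas]
    exact integral_indicator_one hs
  have hfun : (fun ω => K *
          (Set.indicator {ω : Ω | t < min (L ω) (C ω)} (fun _ => (1 : ℝ)) ω / G - lam * c x a) * g)
      = fun ω => (K * g / G) * Set.indicator {ω : Ω | t < min (L ω) (C ω)} (fun _ => (1:ℝ)) ω
          + (-(K * (lam * c x a) * g)) := by
    funext ω; ring
  rw [hfun, integral_add (hindint.const_mul _) (integrable_const _),
    integral_const_mul, hintind, integral_const]
  have hGne : G ≠ 0 := ne_of_gt (hG x a)
  have hπ0ne : π0 x a ≠ 0 := ne_of_gt hπ0pos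
  simp only [measure_univ, probReal_univ, ENNReal.toReal_one, smul_eq_mul, one_mul, hK]
  field_simp
  ring
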